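/- For the model fhat(x_1, x_2) = b_1 x_1 + b_2 x_2 + b_12 x_1 x_2 with E[X_1] = E[X_2] = 0 and finite fourth moments, the variance of the difference f^{PD,c}_{{1,2}}(X_1, X_2) - f^{PD,c}_{{1}}(X_1) - f^{PD,c}_{{2}}(X_2), where each f^{PD,c} is the mean-centered partial dependence function evaluated at the random features, equals b_12^2 Var(X_1 X_2) = b_12^2 (Var(X_1)Var(X_2) - Cov(X_1,X_2)^2 + Cov(X_1^2, X_2^2)). -/

import Mathlib

open MeasureTheory ProbabilityTheory

/-- Covariance of two real random variables. -/
noncomputable def cov {Ω : Type*} [MeasurableSpace Ω] (μ : Measure Ω)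
    (f g : Ω → ℝ) : ℝ :=
  (∫ ω, f ω * g ω ∂μ) - (∫ ω, f ω ∂μ) * (∫ ω, g ω ∂μ)

lemma variance_sub_const' {Ω : Type*} [MeasurableSpace Ω] {μ : Measure Ω}
    [IsProbabilityMeasure μ] {f : Ω → ℝ} (hf : Integrable f μ) (c : ℝ) :
    variance (fun ω => f ω - c) μ = variance f μ := by
  unfold ProbabilityTheory.variance ProbabilityTheory.evariance
  congr 1
  have hmean : μ[fun ω => f ω - c] = μ[f] - c := by
    rw [integral_sub hf (integrable_const c), integral_const]
    simp
  refine lintegral_congr fun ω => ?_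
  congr 2
  rw [hmean]
  ring_nf

/-- For `f̂(x₁,x₂) = b₁x₁ + b₂x₂ + b₁₂x₁x₂` with zero-mean features,
the variance of `f^{PD,c}_{12}(X₁,X₂) - f^{PD,c}_{1}(X₁) - f^{PD,c}_{2}(X₂)`
equals `b₁₂² Var(X₁X₂) = b₁₂²(Var(X₁)Var(X₂) - Cov(X₁,X₂)² + Cov(X₁²,X₂²))`. -/
theorem stmt_9 {Ω : Type*} [MeasurableSpace Ω] (μ : Measure Ω)
    [IsProbabilityMeasure μ]
    (X1 X2 : Ω → ℝ) (hm1 : MemLp X1 4 μ) (hm2 : MemLp X2 4 μ)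
    (h1 : ∫ ω, X1 ω ∂μ = 0) (h2 : ∫ ω, X2 ω ∂μ = 0)
    (b1 b2 b12 : ℝ) (fhat : ℝ → ℝ → ℝ)
    (hfhat : ∀ x1 x2, fhat x1 x2 = b1 * x1 + b2 * x2 + b12 * x1 * x2)
    -- the partial dependence functions
    (fPD12 : ℝ → ℝ → ℝ) (hPD12 : ∀ x1 x2, fPD12 x1 x2 = fhat x1 x2)
    (fPD1 : ℝ → ℝ) (hPD1 : ∀ x1, fPD1 x1 = ∫ ω, fhat x1 (X2 ω) ∂μ)
    (fPD2 : ℝ → ℝ) (hPD2 : ∀ x2, fPD2 x2 = ∫ ω, fhat (X1 ω) x2 ∂μ)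
    -- their mean-centered versions (centered at the random features)
    (fPD12c : ℝ → ℝ → ℝ)
    (hPD12c : ∀ x1 x2, fPD12c x1 x2
      = fPD12 x1 x2 - ∫ ω, fPD12 (X1 ω) (X2 ω) ∂μ)
    (fPD1c : ℝ → ℝ)
    (hPD1c : ∀ x1, fPD1c x1 = fPD1 x1 - ∫ ω, fPD1 (X1 ω) ∂μ)
    (fPD2c : ℝ → ℝ)
    (hPD2c : ∀ x2, fPD2c x2 = fPD2 x2 - ∫ ω, fPD2 (X2 ω) ∂μ) :
    variance (fun ω => fPD12c (X1 ω) (X2 ω) - fPD1c (X1 ω) - fPD2c (X2 ω)) μ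
      = b12 ^ 2 * variance (fun ω => X1 ω * X2 ω) μ ∧
    variance (fun ω => fPD12c (X1 ω) (X2 ω) - fPD1c (X1 ω) - fPD2c (X2 ω)) μ
      = b12 ^ 2 * (variance X1 μ * variance X2 μ - (cov μ X1 X2) ^ 2
          + cov μ (fun ω => X1 ω ^ 2) (fun ω => X2 ω ^ 2)) := by
  have hm1_2 : MemLp X1 2 μ := hm1.mono_exponent (by norm_num)
  have hm2_2 : MemLp X2 2 μ := hm2.mono_exponent (by norm_num)
  have hi1 : Integrable X1 μ := hm1_2.integrable (by norm_num)
  have hi2 : Integrable X2 μ := hm2_2.integrable (by norm_num)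
  have hp12 : MemLp (fun ω => X1 ω * X2 ω) 2 μ := by
    have h4 : (1:ENNReal)/2 = 1/4 + 1/4 := by
      rw [ENNReal.div_add_div_same]
      rw [ENNReal.div_eq_div_iff] <;> norm_num
    have : MemLp (X1 • X2) 2 μ := by
      haveI : ENNReal.HolderTriple 4 4 2 := ⟨by simpa only [one_div] using h4.symm⟩
      exact hm2.smul hm1
    exact this
  have hi12 : Integrable (fun ω => X1 ω * X2 ω) μ := hp12.integrable (by norm_num)
  set m : ℝ := ∫ ω, X1 ω * X2 ω ∂μ with hm
  -- the PD functions in closed form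
  have e1 : ∀ x1, fPD1 x1 = b1 * x1 := by
    intro x1
    rw [hPD1]
    have hrw : (fun ω => fhat x1 (X2 ω))
        = fun ω => b1 * x1 + (b2 + b12 * x1) * X2 ω := by
      funext ω; rw [hfhat]; ring
    rw [hrw, integral_add (integrable_const _) (hi2.const_mul _),
      integral_const, integral_const_mul, h2]
    simp
  have e2 : ∀ x2, fPD2 x2 = b2 * x2 := by
    intro x2
    rw [hPD2]
    have hrw : (fun ω => fhat (X1 ω) x2)
        = fun ω => b2 * x2 + (b1 + b12 * x2) * X1 ω := by
      funext ω; rw [hfhat]; ring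
    rw [hrw, integral_add (integrable_const _) (hi1.const_mul _),
      integral_const, integral_const_mul, h1]
    simp
  have I0 : (∫ ω, fPD12 (X1 ω) (X2 ω) ∂μ) = b12 * m := by
    have hrw : (fun ω => fPD12 (X1 ω) (X2 ω))
        = fun ω => (b1 * X1 ω + b2 * X2 ω) + b12 * (X1 ω * X2 ω) := by
      funext ω; rw [hPD12, hfhat]; ring
    have hsum : Integrable (fun ω => b1 * X1 ω + b2 * X2 ω) μ :=
      (hi1.const_mul b1).add (hi2.const_mul b2)
    rw [hrw, integral_add hsum (hi12.const_mul b12),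
      integral_add (hi1.const_mul b1) (hi2.const_mul b2),
      integral_const_mul, integral_const_mul, integral_const_mul, h1, h2, ← hm]
    ring
  have J1 : (∫ ω, fPD1 (X1 ω) ∂μ) = 0 := by
    simp only [e1]; rw [integral_const_mul, h1, mul_zero]
  have J2 : (∫ ω, fPD2 (X2 ω) ∂μ) = 0 := by
    simp only [e2]; rw [integral_const_mul, h2, mul_zero]
  have key : (fun ω => fPD12c (X1 ω) (X2 ω) - fPD1c (X1 ω) - fPD2c (X2 ω))
      = fun ω => b12 * (X1 ω * X2 ω) - b12 * m := by
    funext ω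
    rw [hPD12c, hPD1c, hPD2c, I0, J1, J2, e1, e2, hPD12, hfhat]
    ring
  have v1 : variance (fun ω => fPD12c (X1 ω) (X2 ω) - fPD1c (X1 ω) - fPD2c (X2 ω)) μ
      = b12 ^ 2 * variance (fun ω => X1 ω * X2 ω) μ := by
    rw [key, variance_sub_const' (hi12.const_mul b12) (b12 * m)]
    exact variance_const_mul b12 _ μ
  refine ⟨v1, ?_⟩
  rw [v1, variance_eq_sub hp12, variance_eq_sub hm1_2, variance_eq_sub hm2_2]
  simp only [cov, Pi.pow_apply]
  rw [h1, h2, ← hm]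
  have hC : (∫ ω, (X1 ω * X2 ω) ^ 2 ∂μ) = ∫ ω, X1 ω ^ 2 * X2 ω ^ 2 ∂μ := by
    simp_rw [mul_pow]
  rw [hC]
  ring
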